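/- arXiv:1811.07959 — 2 statements merged into one kernel-verified Lean document; each statement's English description precedes it below -/
import Mathlib

section
/- Let P = (X, ≤) be a chain complete N-free poset whose comparability graph is connected, let x ∈ X, let C be a maximal chain of P containing x, and let 𝔰 and 𝔦 be the supremum and the infimum of C respectively. Then 𝔰 is comparable to all elements of inc(x), or 𝔦 is comparable to all elements of inc(x). -/
/-- `(a,b,c,d)` is an `N` in the poset: the four elements are distinct, `a < b`, `c < b`,
`c < d`, and these are the only comparabilities among them. -/
def IsN {X : Type*} [PartialOrder X] (a b c d : X) : Prop :=
  a ≠ b ∧ a ≠ c ∧ a ≠ d ∧ b ≠ c ∧ b ≠ d ∧ c ≠ d ∧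
  a < b ∧ c < b ∧ c < d ∧
  (¬ a ≤ c ∧ ¬ c ≤ a) ∧ (¬ a ≤ d ∧ ¬ d ≤ a) ∧ (¬ b ≤ d ∧ ¬ d ≤ b)

/-- A poset is `N`-free if it contains no `N`. -/
def NFree (X : Type*) [PartialOrder X] : Prop :=
  ∀ a b c d : X, ¬ IsN a b c d

/-- `inc(x)`: the set of elements incomparable to `x`. -/
def incP {X : Type*} [PartialOrder X] (x : X) : Set X :=
  {y | ¬ x ≤ y ∧ ¬ y ≤ x}

/-- The comparability graph of a poset. -/
def compGraph (X : Type*) [PartialOrder X] : SimpleGraph X where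
  Adj u v := u < v ∨ v < u
  symm := ⟨by intro u v h; exact h.symm⟩
  loopless := ⟨by intro u h; rcases h with h | h <;> exact lt_irrefl u h⟩

/-- `A` is a module of the poset: every element outside `A` relates in the same way
to all elements of `A`. -/
def PModule {X : Type*} [PartialOrder X] (A : Set X) : Prop :=
  ∀ v ∉ A, ∀ a ∈ A, ∀ a' ∈ A, (v < a → v < a') ∧ (a < v → a' < v)

/-- `C⁺_x`: elements above `x` comparable to all elements of `inc(x)`. -/
def Cplus {X : Type*} [PartialOrder X] (x : X) : Set X :=
  {y | x < y ∧ ∀ z ∈ incP x, (y ≤ z ∨ z ≤ y)}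

/-- `C⁻_x`: elements below `x` comparable to all elements of `inc(x)`. -/
def Cminus {X : Type*} [PartialOrder X] (x : X) : Set X :=
  {y | y < x ∧ ∀ z ∈ incP x, (y ≤ z ∨ z ≤ y)}

/-- A poset is chain complete if every nonempty chain has a supremum and an infimum. -/
def ChainComplete (X : Type*) [PartialOrder X] : Prop :=
  ∀ C : Set X, C.Nonempty → IsChain (· ≤ ·) C → (∃ s, IsLUB C s) ∧ (∃ i, IsGLB C i)

lemma mkN {X : Type*} [PartialOrder X] {a b c d : X}
    (h1 : a < b) (h2 : c < b) (h3 : c < d)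
    (h4 : ¬ a ≤ c) (h5 : ¬ c ≤ a) (h6 : ¬ a ≤ d) (h7 : ¬ d ≤ a)
    (h8 : ¬ b ≤ d) (h9 : ¬ d ≤ b) : IsN a b c d :=
  ⟨h1.ne, by rintro rfl; exact h4 le_rfl, by rintro rfl; exact h6 le_rfl,
   h2.ne', h8 ∘ (· ▸ le_rfl), h3.ne, h1, h2, h3, ⟨h4, h5⟩, ⟨h6, h7⟩, ⟨h8, h9⟩⟩

lemma walk_pres {X : Type*} {G : SimpleGraph X} (P : X → Prop)
    (hstep : ∀ u v, P u → G.Adj u v → P v) {a b : X} (p : G.Walk a b) (ha : P a) : P b := by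
  induction p with
  | nil => exact ha
  | cons h _ ih => exact ih (hstep _ _ ha h)

lemma key_lemma {X : Type*} [PartialOrder X] (hN : NFree X)
    (hconn : (compGraph X).Connected)
    {C : Set X} (hC : IsMaxChain (· ≤ ·) C) {x : X} (hxC : x ∈ C)
    {s i : X} (hsC : s ∈ C) (hiC : i ∈ C) (hs : IsLUB C s) (hi : IsGLB C i)
    {q : X} (hq : ∀ c ∈ C, ¬ q ≤ c ∧ ¬ c ≤ q) : False := by
  set P : X → Prop := fun u => ∀ c ∈ C, ¬ u ≤ c ∧ ¬ c ≤ u with hP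
  have hstep : ∀ u v, P u → (compGraph X).Adj u v → P v := by
    intro u v hu hadj
    have hadj' : u < v ∨ v < u := hadj
    rcases hadj' with huv | hvu
    · -- u < v
      have hvC : v ∉ C := fun hv => (hu v hv).1 huv.le
      have hvs : ¬ v ≤ s := fun h => (hu s hsC).1 (huv.le.trans h)
      have hsv : ¬ s ≤ v := by
        intro h
        have hch : IsChain (· ≤ ·) (insert v C) :=
          hC.1.insert (fun c hc _ => Or.inr ((hs.1 hc).trans h))
        exact hvC ((hC.2 hch (Set.subset_insert _ _)) ▸ Set.mem_insert v C)
      intro c hc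
      refine ⟨fun h => (hu c hc).1 (huv.le.trans h), fun h => ?_⟩
      have hcv : c < v := lt_of_le_of_ne h (fun e => hvC (e ▸ hc))
      have hcs : c < s := lt_of_le_of_ne (hs.1 hc) (fun e => hsv (by rw [← e]; exact h))
      exact hN u v c s (mkN huv hcv hcs (hu c hc).1 (hu c hc).2
        (hu s hsC).1 (hu s hsC).2 hvs hsv)
    · -- v < u
      have hvC : v ∉ C := fun hv => (hu v hv).2 hvu.le
      have hiv : ¬ i ≤ v := fun h => (hu i hiC).2 (h.trans hvu.le)
      have hvi : ¬ v ≤ i := by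
        intro h
        have hch : IsChain (· ≤ ·) (insert v C) :=
          hC.1.insert (fun c hc _ => Or.inl (h.trans (hi.1 hc)))
        exact hvC ((hC.2 hch (Set.subset_insert _ _)) ▸ Set.mem_insert v C)
      intro c hc
      refine ⟨fun h => ?_, fun h => (hu c hc).2 (h.trans hvu.le)⟩
      have hvc : v < c := lt_of_le_of_ne h (fun e => hvC (e ▸ hc))
      have hic : i < c := lt_of_le_of_ne (hi.1 hc) (fun e => hvi (by rw [e]; exact h))
      exact hN i c v u (mkN hic hvc hvu hiv hvi
        (hu i hiC).2 (hu i hiC).1 (hu c hc).2 (hu c hc).1)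
  obtain ⟨p⟩ := hconn.preconnected q x
  exact (walk_pres P hstep p hq x hxC).1 le_rfl

theorem sup_or_inf_of_maximal_chain_comparable
    {X : Type*} [PartialOrder X] (hcc : ChainComplete X) (hN : NFree X)
    (hconn : (compGraph X).Connected) (x : X) (C : Set X)
    (hC : IsMaxChain (· ≤ ·) C) (hxC : x ∈ C)
    (s i : X) (hs : IsLUB C s) (hi : IsGLB C i) :
    (∀ z ∈ incP x, s ≤ z ∨ z ≤ s) ∨ (∀ z ∈ incP x, i ≤ z ∨ z ≤ i) := by
  by_contra hcon
  push_neg at hcon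
  obtain ⟨⟨z, hzinc, hsz, hzs⟩, w, hwinc, hiw, hwi⟩ := hcon
  have hzx : ¬ x ≤ z := hzinc.1
  have hzx' : ¬ z ≤ x := hzinc.2
  have hwx : ¬ x ≤ w := hwinc.1
  have hwx' : ¬ w ≤ x := hwinc.2
  have hsC : s ∈ C := by
    have hch : IsChain (· ≤ ·) (insert s C) :=
      hC.1.insert (fun c hc _ => Or.inr (hs.1 hc))
    exact (hC.2 hch (Set.subset_insert _ _)) ▸ Set.mem_insert s C
  have hiC : i ∈ C := by
    have hch : IsChain (· ≤ ·) (insert i C) :=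
      hC.1.insert (fun c hc _ => Or.inl (hi.1 hc))
    exact (hC.2 hch (Set.subset_insert _ _)) ▸ Set.mem_insert i C
  have hxs : x ≤ s := hs.1 hxC
  have hix : i ≤ x := hi.1 hxC
  by_cases hzi : i < z
  · by_cases hws : w < s
    · have hixlt : i < x := lt_of_le_of_ne hix (fun e => hzx (le_of_lt (e ▸ hzi)))
      have hxslt : x < s := lt_of_le_of_ne hxs (fun e => hwx' (by rw [e]; exact hws.le))
      by_cases hzw : z ≤ w
      · exact hiw (hzi.le.trans hzw)
      · by_cases hwz : w ≤ z
        · have hwzlt : w < z := lt_of_le_of_ne hwz (fun e => hiw (by rw [e]; exact hzi.le))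
          exact hN x s w z (mkN hxslt hws hwzlt hwx hwx' hzx hzx' hsz hzs)
        · exact hN w s i z (mkN hws (hixlt.trans_le hxs) hzi hwi hiw hwz hzw hsz hzs)
    · refine key_lemma hN hconn hC hxC hsC hiC hs hi (q := w) (fun c hc => ⟨fun h => ?_, fun h => ?_⟩)
      · have hwsle : w ≤ s := h.trans (hs.1 hc)
        exact hws (lt_of_le_of_ne hwsle (fun e => hwx (by rw [e]; exact hxs)))
      · exact hiw ((hi.1 hc).trans h)
  · refine key_lemma hN hconn hC hxC hsC hiC hs hi (q := z) (fun c hc => ⟨fun h => ?_, fun h => ?_⟩)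
    · exact hzs (h.trans (hs.1 hc))
    · have hizle : i ≤ z := (hi.1 hc).trans h
      exact hzi (lt_of_le_of_ne hizle (fun e => hzx' (by rw [← e]; exact hix)))
end

section
/- A poset P is prime if and only if its comparability graph is prime. -/
/-- A graph is prime if all its modules are trivial. -/
def GraphPrime {X : Type*} (G : SimpleGraph X) : Prop :=
  ∀ A : Set X, (∀ v ∉ A, (∀ a ∈ A, G.Adj v a) ∨ (∀ a ∈ A, ¬ G.Adj v a)) →
    A = ∅ ∨ (∃ a : X, A = {a}) ∨ A = Set.univ

/-- A poset is prime if all its modules are trivial. -/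
def PosetPrime (X : Type*) [PartialOrder X] : Prop :=
  ∀ A : Set X, PModule A → A = ∅ ∨ (∃ a : X, A = {a}) ∨ A = Set.univ

section Aux

variable {X : Type*} [PartialOrder X]

lemma compGraph_adj {u v : X} : (compGraph X).Adj u v ↔ (u < v ∨ v < u) := Iff.rfl

/-- `v` splits the set `A`: it is outside, comparable to everything in `A`,
with elements of `A` on both sides. -/
def Splits (A : Set X) (v : X) : Prop :=
  v ∉ A ∧ (∀ a ∈ A, v < a ∨ a < v) ∧ (∃ a ∈ A, v < a) ∧ (∃ a ∈ A, a < v)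

lemma splitter_of_not_pmodule {A : Set X}
    (hA : ∀ v ∉ A, (∀ a ∈ A, (compGraph X).Adj v a) ∨ (∀ a ∈ A, ¬ (compGraph X).Adj v a))
    (h : ¬ PModule A) : ∃ v, Splits A v := by
  unfold PModule at h
  push_neg at h
  obtain ⟨v, hv, a, ha, a', ha', hbad⟩ := h
  by_cases h1 : v < a → v < a'
  · obtain ⟨hav, hna⟩ := hbad h1
    have hadj : ∀ b ∈ A, v < b ∨ b < v := by
      rcases hA v hv with h2 | h2
      · exact fun b hb => h2 b hb
      · exact absurd (Or.inr hav) (h2 a ha)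
    have hva' : v < a' := (hadj a' ha').resolve_right hna
    exact ⟨v, hv, hadj, ⟨a', ha', hva'⟩, ⟨a, ha, hav⟩⟩
  · push_neg at h1
    obtain ⟨hva, hna⟩ := h1
    have hadj : ∀ b ∈ A, v < b ∨ b < v := by
      rcases hA v hv with h2 | h2
      · exact fun b hb => h2 b hb
      · exact absurd (Or.inl hva) (h2 a ha)
    have hav' : a' < v := (hadj a' ha').resolve_left hna
    exact ⟨v, hv, hadj, ⟨a, ha, hva⟩, ⟨a', ha', hav'⟩⟩

lemma bigB_pmodule {A : Set X}
    (hA : ∀ v ∉ A, (∀ a ∈ A, (compGraph X).Adj v a) ∨ (∀ a ∈ A, ¬ (compGraph X).Adj v a)) :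
    PModule (A ∪ {v | Splits A v}) := by
  intro w hw b hb b' hb'
  have hwA : w ∉ A := fun h => hw (Or.inl h)
  have hwS : ¬ Splits A w := fun h => hw (Or.inr h)
  rcases hA w hwA with hall | hnone
  · -- w comparable to all of A; since not a splitter, all one direction
    have hcomp : ∀ a ∈ A, w < a ∨ a < w := fun a ha => hall a ha
    have huni : (∀ a ∈ A, w < a) ∨ (∀ a ∈ A, a < w) := by
      by_contra hc
      push_neg at hc
      obtain ⟨⟨a1, ha1, h1⟩, ⟨a2, ha2, h2⟩⟩ := hc
      have hu : w < a2 := (hcomp a2 ha2).resolve_right h2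
      have hd : a1 < w := (hcomp a1 ha1).resolve_left h1
      exact hwS ⟨hwA, hcomp, ⟨a2, ha2, hu⟩, ⟨a1, ha1, hd⟩⟩
    rcases huni with hup | hdown
    · -- w below everything in A, hence below everything in B
      have hB : ∀ c ∈ A ∪ {v | Splits A v}, w < c := by
        rintro c (hc | hc)
        · exact hup c hc
        · obtain ⟨a, ha, haw⟩ := hc.2.2.2
          exact lt_trans (hup a ha) haw
      exact ⟨fun _ => hB b' hb', fun hbw => absurd (hB b hb) (asymm hbw)⟩
    · have hB : ∀ c ∈ A ∪ {v | Splits A v}, c < w := by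
        rintro c (hc | hc)
        · exact hdown c hc
        · obtain ⟨a, ha, haw⟩ := hc.2.2.1
          exact lt_trans haw (hdown a ha)
      exact ⟨fun hwb => absurd (hB b hb) (asymm hwb), fun _ => hB b' hb'⟩
  · -- w incomparable to all of A, hence to everything in B
    have hB : ∀ c ∈ A ∪ {v | Splits A v}, ¬ w < c ∧ ¬ c < w := by
      rintro c (hc | hc)
      · have := hnone c hc
        rw [compGraph_adj] at this
        push_neg at this
        exact this
      · constructor
        · intro hwc
          obtain ⟨a, ha, hca⟩ := hc.2.2.1
          exact hnone a ha (Or.inl (lt_trans hwc hca))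
        · intro hcw
          obtain ⟨a, ha, hac⟩ := hc.2.2.2
          exact hnone a ha (Or.inr (lt_trans hac hcw))
    exact ⟨fun hwb => absurd hwb (hB b hb).1, fun hbw => absurd hbw (hB b hb).2⟩

lemma lowset_pmodule {A : Set X} {v : X} (hv : Splits A v)
    (hall : ∀ u : X, u ∈ A ∨ Splits A u) :
    PModule {x : X | ∀ s ∈ A, v < s → x < s} := by
  intro u hu e he e' he'
  constructor
  · intro hue
    exact absurd (fun s hs hvs => lt_trans hue (he s hs hvs)) hu
  · intro heu
    -- get s₀ ∈ A with v < s₀ and ¬ u < s₀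
    have hu' : ∃ s ∈ A, v < s ∧ ¬ u < s := by
      by_contra hc
      push_neg at hc
      exact hu (fun s hs hvs => hc s hs hvs)
    obtain ⟨s₀, hs₀, hvs₀, hus₀⟩ := hu'
    rcases hall u with huA | huS
    · rcases hv.2.1 u huA with hvu | huv
      · exact he' u huA hvu
      · exact absurd (fun s hs hvs => lt_trans huv hvs) hu
    · have : s₀ < u := (huS.2.1 s₀ hs₀).resolve_left hus₀
      exact lt_trans (he' s₀ hs₀ hvs₀) this

end Aux

theorem posetPrime_iff_compGraph_prime {X : Type*} [PartialOrder X] :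
    PosetPrime X ↔ GraphPrime (compGraph X) := by
  constructor
  · intro hP A hA
    by_cases hmod : PModule A
    · exact hP A hmod
    · exfalso
      obtain ⟨v, hv⟩ := splitter_of_not_pmodule hA hmod
      obtain ⟨a, ha, hva⟩ := hv.2.2.1
      have hB := hP _ (bigB_pmodule hA)
      rcases hB with hB | ⟨c, hB⟩ | hB
      · have : v ∈ A ∪ {v | Splits A v} := Or.inr hv
        rw [hB] at this; exact this
      · have h1 : v ∈ A ∪ {v | Splits A v} := Or.inr hv
        have h2 : a ∈ A ∪ {v | Splits A v} := Or.inl ha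
        rw [hB] at h1 h2
        exact hv.1 (h1.symm ▸ h2 ▸ ha)
      · have hall : ∀ u : X, u ∈ A ∨ Splits A u := by
          intro u
          have : u ∈ A ∪ {v | Splits A v} := hB ▸ Set.mem_univ u
          exact this
        have hE := hP _ (lowset_pmodule hv hall)
        obtain ⟨t, ht, htv⟩ := hv.2.2.2
        have hvE : v ∈ {x : X | ∀ s ∈ A, v < s → x < s} := fun s _ hvs => hvs
        have htE : t ∈ {x : X | ∀ s ∈ A, v < s → x < s} :=
          fun s _ hvs => lt_trans htv hvs
        have haE : a ∉ {x : X | ∀ s ∈ A, v < s → x < s} := by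
          intro h
          exact lt_irrefl a (h a ha hva)
        rcases hE with hE | ⟨c, hE⟩ | hE
        · rw [hE] at hvE; exact hvE
        · rw [hE] at hvE htE
          have : t = v := htE.trans hvE.symm
          exact hv.1 (this ▸ ht)
        · exact haE (hE ▸ Set.mem_univ a)
  · intro hG A hA
    apply hG
    intro v hv
    by_cases h : ∃ a ∈ A, (compGraph X).Adj v a
    · left
      obtain ⟨a₀, ha₀, hadj⟩ := h
      intro a ha
      rw [compGraph_adj] at hadj ⊢
      rcases hadj with h1 | h1
      · exact Or.inl ((hA v hv a₀ ha₀ a ha).1 h1)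
      · exact Or.inr ((hA v hv a₀ ha₀ a ha).2 h1)
    · right
      push_neg at h
      exact h
end
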